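/- The map φ : X → 𝒳 sending x to the thread (X_*^n) is injective and continuous; in particular, if x ≠ y then X_*^n ∩ Y_*^n = ∅ for all sufficiently large n. -/

import Mathlib

open Metric Set Filter

/-- The FASO bonding map at one level: `q(C) = ⋃_{c ∈ C} B(c,ε) ∩ A`. -/
def qmap {X : Type*} [MetricSpace X] (ε : ℝ) (A : Set X) (C : Set X) : Set X :=
  ⋃ c ∈ C, Metric.ball c ε ∩ A

/-- Iterated bonding maps: `qdown ε A n k` is `q_{n, n+k}`, mapping subsets at level `n+k`
down to subsets at level `n`. -/
def qdown {X : Type*} [MetricSpace X] (ε : ℕ → ℝ) (A : ℕ → Set X) (n : ℕ) :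
    ℕ → Set X → Set X
  | 0, C => C
  | k + 1, C => qdown ε A n k (qmap (ε (n + k)) (A (n + k)) C)

/-- `A_m(x)`: the set of nearest points of `A` to `x`. -/
def nearestPts {X : Type*} [MetricSpace X] (x : X) (A : Set X) : Set X :=
  {a ∈ A | dist x a = Metric.infDist x A}

/-- `X_*^n = ⋃_{m > n} q_{n,m}(A_m(x))`. -/
def Xstar {X : Type*} [MetricSpace X] (ε : ℕ → ℝ) (A : ℕ → Set X) (x : X) (n : ℕ) :
    Set X :=
  ⋃ m, ⋃ (_ : n < m), qdown ε A n (m - n) (nearestPts x (A m))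

/-- The finite space `U_δ(A)`: nonempty subsets of `A` of diameter `< δ`. -/
def Ufin {X : Type*} [MetricSpace X] (δ : ℝ) (A : Set X) : Type _ :=
  {C : Set X // C ⊆ A ∧ C.Nonempty ∧ Metric.diam C < δ}

/-- The Alexandroff topology of the reverse-inclusion order on `U_δ(A)`
(`C ≤ D` iff `D ⊆ C`): the open sets are the lower sets, i.e. the sets closed under
passing to supersets; the minimal open neighborhood of `C` is `{D : C ⊆ D}`. -/
instance UfinTop {X : Type*} [MetricSpace X] (δ : ℝ) (A : Set X) :
    TopologicalSpace (Ufin δ A) where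
  IsOpen S := ∀ C ∈ S, ∀ D : Ufin δ A, C.1 ⊆ D.1 → D ∈ S
  isOpen_univ := fun _ _ D _ => Set.mem_univ D
  isOpen_inter := fun s t hs ht C hC D hCD =>
    ⟨hs C hC.1 D hCD, ht C hC.2 D hCD⟩
  isOpen_sUnion := fun S hS C hC D hCD => by
    obtain ⟨s, hsS, hCs⟩ := hC
    exact ⟨s, hsS, hS s hsS C hCs D hCD⟩

/-- The inverse limit `𝒳` of the inverse sequence `(U_{4ε_n}(A_n), q_{n,n+1})`, as the
subspace of the product `Π n, U_{4ε_n}(A_n)` consisting of the threads. -/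
def FasoLimit {X : Type*} [MetricSpace X] (ε : ℕ → ℝ) (A : ℕ → Set X) : Type _ :=
  {f : (n : ℕ) → Ufin (4 * ε n) (A n) // ∀ n, qmap (ε n) (A n) (f (n + 1)).1 = (f n).1}

instance FasoLimitTop {X : Type*} [MetricSpace X] (ε : ℕ → ℝ) (A : ℕ → Set X) :
    TopologicalSpace (FasoLimit ε A) :=
  inferInstanceAs (TopologicalSpace
    {f : (n : ℕ) → Ufin (4 * ε n) (A n) //
      ∀ n, qmap (ε n) (A n) (f (n + 1)).1 = (f n).1})


section Helpers
variable {X : Type*} [MetricSpace X] (ε : ℕ → ℝ) (A : ℕ → Set X)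

lemma qmap_mem {δ : ℝ} {B C : Set X} {a : X} :
    a ∈ qmap δ B C ↔ ∃ c ∈ C, dist a c < δ ∧ a ∈ B := by
  simp only [qmap, mem_iUnion, mem_inter_iff, mem_ball]; tauto

lemma qmap_mono {δ : ℝ} {B : Set X} {C D : Set X} (h : C ⊆ D) : qmap δ B C ⊆ qmap δ B D :=
  biUnion_subset_biUnion_left h

lemma qmap_subset {δ : ℝ} {B C : Set X} : qmap δ B C ⊆ B := by
  intro a ha
  obtain ⟨c, _, _, h⟩ := qmap_mem.1 ha
  exact h

lemma qmap_iUnion {δ : ℝ} {B : Set X} {ι : Sort*} (S : ι → Set X) :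
    qmap δ B (⋃ i, S i) = ⋃ i, qmap δ B (S i) := by
  ext a; simp [qmap_mem]; tauto

lemma qdown_succ_def {n k : ℕ} {C : Set X} :
    qdown ε A n (k+1) C = qdown ε A n k (qmap (ε (n+k)) (A (n+k)) C) := rfl

lemma qdown_mono {n : ℕ} : ∀ {k : ℕ} {C D : Set X}, C ⊆ D → qdown ε A n k C ⊆ qdown ε A n k D
  | 0, _, _, h => h
  | k+1, _, _, h => qdown_mono (k := k) (qmap_mono h)

lemma qdown_succ {n : ℕ} : ∀ (k : ℕ) (C : Set X),
    qdown ε A n (k+1) C = qmap (ε n) (A n) (qdown ε A (n+1) k C)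
  | 0, C => rfl
  | k+1, C => by
    rw [qdown_succ_def]
    rw [qdown_succ k]
    have h : n + 1 + k = n + (k + 1) := by omega
    rw [show qdown ε A (n+1) (k+1) C
        = qdown ε A (n+1) k (qmap (ε (n+1+k)) (A (n+1+k)) C) from rfl, h]

lemma qdown_subset {n : ℕ} : ∀ (k : ℕ) (C : Set X), qdown ε A n (k+1) C ⊆ A n
  | 0, _ => qmap_subset
  | k+1, _ => qdown_subset k _

lemma qmap_ball {δ : ℝ} {B C : Set X} {x : X} {r : ℝ} (h : C ⊆ closedBall x r) :
    qmap δ B C ⊆ closedBall x (r + δ) := by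
  intro a ha
  obtain ⟨c, hc, hd, -⟩ := qmap_mem.1 ha
  have := h hc
  rw [mem_closedBall] at *
  have := dist_triangle a c x
  linarith

lemma qdown_ball (hkey : ∀ m, 2 * ε (m+1) ≤ ε m) :
    ∀ (k n : ℕ) (C : Set X) (x : X) (r : ℝ), C ⊆ closedBall x r →
      qdown ε A n k C ⊆ closedBall x (r + 2 * ε n - 2 * ε (n+k))
  | 0, n, C, x, r, h => by
    refine h.trans (closedBall_subset_closedBall ?_)
    simp
  | k+1, n, C, x, r, h => by
    have h1 : qmap (ε (n+k)) (A (n+k)) C ⊆ closedBall x (r + ε (n+k)) := qmap_ball h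
    have h2 := qdown_ball hkey k n _ x _ h1
    refine h2.trans (closedBall_subset_closedBall ?_)
    have e : n + (k+1) = n + k + 1 := (Nat.add_assoc n k 1).symm
    rw [e]
    have := hkey (n+k)
    linarith

lemma qmap_nonempty {δ : ℝ} {B C : Set X} (hA : ∀ c : X, ∃ a ∈ B, dist c a < δ)
    (hC : C.Nonempty) : (qmap δ B C).Nonempty := by
  obtain ⟨c, hc⟩ := hC
  obtain ⟨a, haB, had⟩ := hA c
  exact ⟨a, qmap_mem.2 ⟨c, hc, by rwa [dist_comm], haB⟩⟩

lemma qdown_nonempty (hApprox : ∀ n (x : X), ∃ a ∈ A n, dist x a < ε n) :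
    ∀ (k n : ℕ) (C : Set X), C.Nonempty → (qdown ε A n k C).Nonempty
  | 0, _, _, h => h
  | k+1, n, _, h =>
    qdown_nonempty hApprox k n _ (qmap_nonempty (fun c => hApprox (n+k) c) h)

end Helpers

/-- The map `φ : X → 𝒳`, `x ↦ (X_*^n)`, is injective and continuous; moreover if
`x ≠ y` then `X_*^n ∩ Y_*^n = ∅` for all sufficiently large `n`. -/
theorem stmt_15 {X : Type*} [MetricSpace X] [CompactSpace X] [Nonempty X]
    (ε : ℕ → ℝ) (A : ℕ → Set X) (γ : ℕ → ℝ)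
    (hεpos : ∀ n, 0 < ε n)
    (hεlim : Filter.Tendsto ε Filter.atTop (nhds 0))
    (hAfin : ∀ n, (A n).Finite)
    (hApprox : ∀ n, ∀ x : X, ∃ a ∈ A n, dist x a < ε n)
    (hγ : ∀ n, IsLUB (Set.range fun x : X => Metric.infDist x (A n)) (γ n))
    (hrec : ∀ n, ε (n + 1) < (ε n - γ n) / 2)
    :
    ∃ φ : X → FasoLimit ε A,
      (∀ (x : X) (n : ℕ), ((φ x).1 n).1 = Xstar ε A x n) ∧
      Continuous φ ∧ Function.Injective φ ∧
      ∀ x y : X, x ≠ y → ∃ N, ∀ n, N ≤ n → Xstar ε A x n ∩ Xstar ε A y n = ∅ := by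
  classical
  have hγub : ∀ n (x : X), infDist x (A n) ≤ γ n := fun n x => (hγ n).1 ⟨x, rfl⟩
  have hγ0 : ∀ n, 0 ≤ γ n := fun n =>
    le_trans infDist_nonneg (hγub n (Classical.arbitrary X))
  have hkey : ∀ n, γ n + 2 * ε (n+1) < ε n := by
    intro n; have := hrec n; linarith
  have hkey' : ∀ m, 2 * ε (m+1) ≤ ε m := by
    intro m; have := hkey m; have := hγ0 m; linarith
  have hγε : ∀ n, γ n < ε n := by
    intro n; have := hkey n; have := hεpos (n+1); linarith
  have hinf_lt : ∀ n (x : X), infDist x (A n) < ε n := by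
    intro n x
    obtain ⟨a, ha, hd⟩ := hApprox n x
    exact lt_of_le_of_lt (infDist_le_dist_of_mem ha) hd
  have hAne : ∀ n, (A n).Nonempty := by
    intro n; obtain ⟨a, ha, -⟩ := hApprox n (Classical.arbitrary X); exact ⟨a, ha⟩
  have hnear_ne : ∀ (x : X) (n : ℕ), (nearestPts x (A n)).Nonempty := by
    intro x n
    obtain ⟨a, ha, hd⟩ := ((hAfin n).isCompact).exists_infDist_eq_dist (hAne n) x
    exact ⟨a, ha, hd.symm⟩
  have hnear_γ : ∀ (x : X) (n : ℕ), nearestPts x (A n) ⊆ closedBall x (γ n) := by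
    intro x n a ha
    rw [mem_closedBall, dist_comm, ha.2]
    exact hγub n x
  have hnear_lt : ∀ (x : X) (n : ℕ), ∀ a ∈ nearestPts x (A n), dist x a < ε n := by
    intro x n a ha
    rw [ha.2]; exact hinf_lt n x
  have hstep_pos : ∀ M, 0 < ε M - γ M - ε (M+1) := by
    intro M; have := hkey M; have := hεpos (M+1); linarith
  have hstep : ∀ (x y : X) (M : ℕ), dist x y < ε M - γ M - ε (M+1) →
      nearestPts x (A M) ⊆ qmap (ε M) (A M) (nearestPts y (A (M+1))) := by
    intro x y M hxy a ha
    obtain ⟨b, hb⟩ := hnear_ne y (M+1)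
    refine qmap_mem.2 ⟨b, hb, ?_, ha.1⟩
    have h1 : dist x a ≤ γ M := by rw [ha.2]; exact hγub M x
    have h2 : dist y b < ε (M+1) := hnear_lt y (M+1) b hb
    have t1 : dist a b ≤ dist a x + dist x b := dist_triangle a x b
    have t2 : dist x b ≤ dist x y + dist y b := dist_triangle x y b
    rw [dist_comm a x] at t1
    linarith
  have hterm_eq : ∀ (n m : ℕ), n < m → ∀ C : Set X,
      qdown ε A n (m-n) (qmap (ε m) (A m) C) = qdown ε A n (m+1-n) C := by
    intro n m hnm C
    have h1 : m + 1 - n = (m - n) + 1 := by omega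
    rw [h1, qdown_succ_def]
    have h2 : n + (m - n) = m := by omega
    rw [h2]
  have hterm_mono : ∀ (x : X) (n m : ℕ), n < m →
      qdown ε A n (m-n) (nearestPts x (A m))
        ⊆ qdown ε A n (m+1-n) (nearestPts x (A (m+1))) := by
    intro x n m hnm
    rw [← hterm_eq n m hnm]
    refine qdown_mono ε A (hstep x x m ?_)
    simpa using hstep_pos m
  have hterm_sub : ∀ (x : X) (n m : ℕ), n < m →
      qdown ε A n (m-n) (nearestPts x (A m)) ⊆ Xstar ε A x n := by
    intro x n m hnm
    exact subset_iUnion₂ (s := fun m _ => qdown ε A n (m-n) (nearestPts x (A m))) m hnm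
  have hXball : ∀ (x : X) (n : ℕ), Xstar ε A x n ⊆ closedBall x (ε n + 2 * ε (n+1)) := by
    intro x n
    simp only [Xstar]
    refine iUnion₂_subset fun m hm => ?_
    have hk : m - n = (m - n - 1) + 1 := by omega
    rw [hk, qdown_succ ε A]
    have hinner : qdown ε A (n+1) (m-n-1) (nearestPts x (A m)) ⊆ closedBall x (2 * ε (n+1)) := by
      have h1 := qdown_ball ε A hkey' (m-n-1) (n+1) (nearestPts x (A m)) x (γ m) (hnear_γ x m)
      have h2 : n + 1 + (m - n - 1) = m := by omega
      rw [h2] at h1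
      refine h1.trans (closedBall_subset_closedBall ?_)
      have := hγε m
      have := hεpos m
      linarith
    refine (qmap_ball hinner).trans (closedBall_subset_closedBall (by linarith))
  have hXA : ∀ (x : X) (n : ℕ), Xstar ε A x n ⊆ A n := by
    intro x n
    simp only [Xstar]
    refine iUnion₂_subset fun m hm => ?_
    have hk : m - n = (m - n - 1) + 1 := by omega
    rw [hk]
    exact qdown_subset ε A _ _
  have hXne : ∀ (x : X) (n : ℕ), (Xstar ε A x n).Nonempty := by
    intro x n
    obtain ⟨p, hp⟩ := qdown_nonempty ε A hApprox (n+1-n) n (nearestPts x (A (n+1)))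
      (hnear_ne x (n+1))
    exact ⟨p, hterm_sub x n (n+1) (by omega) hp⟩
  have hXdiam : ∀ (x : X) (n : ℕ), diam (Xstar ε A x n) < 4 * ε n := by
    intro x n
    have h1 := hεpos n
    have h2 := hεpos (n+1)
    have hr : 0 ≤ ε n + 2 * ε (n+1) := by linarith
    have hle := le_trans (diam_mono (hXball x n) isBounded_closedBall) (diam_closedBall hr)
    have := hkey n
    have := hγ0 n
    linarith
  have hthread : ∀ (x : X) (n : ℕ), qmap (ε n) (A n) (Xstar ε A x (n+1)) = Xstar ε A x n := by
    intro x n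
    apply Set.Subset.antisymm
    · simp only [Xstar, qmap_iUnion]
      refine iUnion_subset fun m => iUnion_subset fun hm => ?_
      rw [← qdown_succ ε A]
      have h1 : m - (n+1) + 1 = m - n := by omega
      rw [h1]
      exact subset_iUnion₂ (s := fun m _ => qdown ε A n (m-n) (nearestPts x (A m))) m
        (by omega)
    · refine iUnion₂_subset fun m hm => ?_
      refine (hterm_mono x n m hm).trans ?_
      rw [show m+1-n = (m-n)+1 by omega, qdown_succ ε A]
      refine qmap_mono ?_
      rw [show m - n = (m+1) - (n+1) by omega]
      exact hterm_sub x (n+1) (m+1) (by omega)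
  have hstab : ∀ (x : X) (n : ℕ), ∃ M, n < M ∧
      Xstar ε A x n ⊆ qdown ε A n (M-n) (nearestPts x (A M)) := by
    intro x n
    have hfin : (Xstar ε A x n).Finite := (hAfin n).subset (hXA x n)
    have hch : ∀ p : X, p ∈ Xstar ε A x n →
        ∃ m, n < m ∧ p ∈ qdown ε A n (m-n) (nearestPts x (A m)) := by
      intro p hp
      simpa only [Xstar, mem_iUnion, exists_prop] using hp
    choose! f hf1 hf2 using hch
    have hchain : ∀ (m M' : ℕ), n < m → m ≤ M' →
        qdown ε A n (m-n) (nearestPts x (A m))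
          ⊆ qdown ε A n (M'-n) (nearestPts x (A M')) := by
      intro m M' hnm hmM
      induction M', hmM using Nat.le_induction with
      | base => exact subset_rfl
      | succ M' hle ih => exact ih.trans (hterm_mono x n M' (by omega))
    refine ⟨(n+1) ⊔ hfin.toFinset.sup f, by simp [Nat.lt_succ_iff], fun p hp => ?_⟩
    have hfp : f p ≤ (n+1) ⊔ hfin.toFinset.sup f :=
      le_trans (Finset.le_sup (hfin.mem_toFinset.2 hp)) le_sup_right
    exact hchain (f p) _ (hf1 p hp) hfp (hf2 p hp)
  have hcont : ∀ (x : X) (n : ℕ), ∃ δ > 0, ∀ y : X,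
      dist x y < δ → Xstar ε A x n ⊆ Xstar ε A y n := by
    intro x n
    obtain ⟨M, hnM, hsub⟩ := hstab x n
    refine ⟨ε M - γ M - ε (M+1), hstep_pos M, fun y hy => ?_⟩
    refine hsub.trans ?_
    refine (qdown_mono ε A (hstep x y M hy)).trans ?_
    rw [hterm_eq n M hnM]
    exact hterm_sub y n (M+1) (by omega)
  have hdisj : ∀ x y : X, x ≠ y →
      ∃ N, ∀ n, N ≤ n → Xstar ε A x n ∩ Xstar ε A y n = ∅ := by
    intro x y hxy
    have hd : 0 < dist x y := dist_pos.2 hxy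
    have hev : ∀ᶠ n in atTop, ε n < dist x y / 4 :=
      hεlim.eventually (gt_mem_nhds (by linarith))
    obtain ⟨N, hN⟩ := eventually_atTop.1 hev
    refine ⟨N, fun n hn => ?_⟩
    rw [eq_empty_iff_forall_notMem]
    rintro p ⟨hpx, hpy⟩
    have h1 := hXball x n hpx
    have h2 := hXball y n hpy
    rw [mem_closedBall] at h1 h2
    have h3 := hN n hn
    have h4 := hkey n
    have h5 := hγ0 n
    have ht : dist x y ≤ dist x p + dist p y := dist_triangle x p y
    rw [dist_comm x p] at ht
    linarith
  refine ⟨fun x => ⟨fun n => ⟨Xstar ε A x n, hXA x n, hXne x n, hXdiam x n⟩,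
    fun n => hthread x n⟩, fun x n => rfl, ?_, ?_, hdisj⟩
  · refine Continuous.subtype_mk (continuous_pi fun n => ?_) _
    apply continuous_def.2
    intro S hS
    rw [Metric.isOpen_iff]
    intro x hx
    obtain ⟨δ, hδ, hsub⟩ := hcont x n
    refine ⟨δ, hδ, fun y hy => ?_⟩
    have hxy : dist x y < δ := by rw [dist_comm]; exact mem_ball.1 hy
    exact hS _ hx _ (hsub y hxy)
  · intro x y hxy
    by_contra hne
    obtain ⟨N, hN⟩ := hdisj x y hne
    obtain ⟨p, hp⟩ := hXne x N
    have hE : Xstar ε A x N = Xstar ε A y N :=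
      congrArg (fun z : FasoLimit ε A => (z.1 N).1) hxy
    have hmem : p ∈ Xstar ε A x N ∩ Xstar ε A y N := ⟨hp, hE ▸ hp⟩
    rw [hN N le_rfl] at hmem
    exact hmem
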